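/- Let c ∈ ℝⁿ be a unit vector, let k ≥ 2 be even, let ε > 0 and M ≥ 1, and let L be a degree-(k+2) pseudoexpectation on ℝ[u₁,…,u_n] that satisfies the constraint {‖u‖₂² = 1} and such that L(⟨c,u⟩^k) ≥ e^{−εk}. Define the polynomial W̄ = (⟨c,u⟩² + (1/M)·‖u‖₂²)^{k/2} ∈ ℝ[u₁,…,u_n]. Then: (i) W̄ is a sum of squares of degree k; (ii) L(W̄) ≥ e^{−εk}; and (iii) L(W̄·⟨c,u⟩²) ≥ (1 − 2/M)·L(W̄) − (1 − 1/M)^{k/2}. -/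

import Mathlib

open MvPolynomial

/-- A polynomial is a sum of squares if it is a finite sum of squares of polynomials. -/
def IsSOS {σ : Type*} (p : MvPolynomial σ ℝ) : Prop :=
  ∃ (r : ℕ) (q : Fin r → MvPolynomial σ ℝ), p = ∑ i, q i ^ 2

/-- A degree-`k` pseudoexpectation on `ℝ[u₁,…,u_n]`: a linear functional with `L 1 = 1`
and `L (P²) ≥ 0` whenever `deg (P²) ≤ k`. -/
def IsPseudoExpectation (n k : ℕ) (L : MvPolynomial (Fin n) ℝ → ℝ) : Prop :=
  (∀ P Q : MvPolynomial (Fin n) ℝ, L (P + Q) = L P + L Q) ∧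
  (∀ (c : ℝ) (P : MvPolynomial (Fin n) ℝ), L (c • P) = c * L P) ∧
  L 1 = 1 ∧
  ∀ P : MvPolynomial (Fin n) ℝ, (P ^ 2).totalDegree ≤ k → 0 ≤ L (P ^ 2)

/-- `L` satisfies the constraint `{P = 0}`: `L (P·Q) = 0` for every `Q` with
`deg (P·Q) ≤ k`. -/
def SatisfiesZero (n k : ℕ) (L : MvPolynomial (Fin n) ℝ → ℝ)
    (P : MvPolynomial (Fin n) ℝ) : Prop :=
  ∀ Q : MvPolynomial (Fin n) ℝ, (P * Q).totalDegree ≤ k → L (P * Q) = 0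


/-- SOS with a degree bound on each square root. -/
def SOSD {σ : Type*} (d : ℕ) (P : MvPolynomial σ ℝ) : Prop :=
  ∃ (ι : Type) (_ : Fintype ι) (q : ι → MvPolynomial σ ℝ),
    (∀ i, (q i).totalDegree ≤ d) ∧ P = ∑ i, q i ^ 2

variable {σ : Type*}

lemma SOSD.isSOS {d : ℕ} {P : MvPolynomial σ ℝ} (h : SOSD d P) : IsSOS P := by
  obtain ⟨ι, _, q, _, rfl⟩ := h
  refine ⟨Fintype.card ι, q ∘ (Fintype.equivFin ι).symm, ?_⟩
  rw [← Equiv.sum_comp (Fintype.equivFin ι).symm (fun i => q i ^ 2)]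
  rfl

lemma sosd_sq {d : ℕ} {q : MvPolynomial σ ℝ} (hq : q.totalDegree ≤ d) : SOSD d (q ^ 2) :=
  ⟨Fin 1, inferInstance, fun _ => q, fun _ => hq, by simp⟩

lemma sosd_zero (d : ℕ) : SOSD d (0 : MvPolynomial σ ℝ) :=
  ⟨Fin 0, inferInstance, fun _ => 0, fun i => i.elim0, by simp⟩

lemma sosd_mono {d d' : ℕ} (hdd : d ≤ d') {P : MvPolynomial σ ℝ} (h : SOSD d P) : SOSD d' P := by
  obtain ⟨ι, _, q, hq, rfl⟩ := h
  exact ⟨ι, ‹_›, q, fun i => (hq i).trans hdd, rfl⟩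

lemma sosd_add {d : ℕ} {P Q : MvPolynomial σ ℝ} (hP : SOSD d P) (hQ : SOSD d Q) :
    SOSD d (P + Q) := by
  obtain ⟨ι, _, q, hq, rfl⟩ := hP
  obtain ⟨ι', _, q', hq', rfl⟩ := hQ
  refine ⟨ι ⊕ ι', inferInstance, Sum.elim q q', ?_, ?_⟩
  · rintro (i | i) <;> [exact hq i; exact hq' i]
  · rw [Fintype.sum_sum_type]; rfl

lemma sosd_mul {d e : ℕ} {P Q : MvPolynomial σ ℝ} (hP : SOSD d P) (hQ : SOSD e Q) :
    SOSD (d + e) (P * Q) := by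
  obtain ⟨ι, _, q, hq, rfl⟩ := hP
  obtain ⟨ι', _, q', hq', rfl⟩ := hQ
  refine ⟨ι × ι', inferInstance, fun p => q p.1 * q' p.2, ?_, ?_⟩
  · intro i
    exact (totalDegree_mul _ _).trans (add_le_add (hq i.1) (hq' i.2))
  · rw [Finset.sum_mul_sum]
    rw [← Finset.sum_product', Finset.univ_product_univ]
    exact Finset.sum_congr rfl (fun p _ => (mul_pow _ _ 2).symm)

lemma sosd_C {d : ℕ} {a : ℝ} (ha : 0 ≤ a) : SOSD d (C a : MvPolynomial σ ℝ) := by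
  have : (C (Real.sqrt a) : MvPolynomial σ ℝ) ^ 2 = C a := by
    rw [← map_pow, sq, Real.mul_self_sqrt ha]
  refine ⟨Fin 1, inferInstance, fun _ => C (Real.sqrt a), fun _ => by simp, by simp [this]⟩

lemma sosd_smul {d : ℕ} {a : ℝ} (ha : 0 ≤ a) {P : MvPolynomial σ ℝ} (h : SOSD d P) :
    SOSD d (a • P) := by
  rw [smul_eq_C_mul]
  simpa using sosd_mul (sosd_C (d := 0) ha) h

lemma sosd_pow {d : ℕ} {P : MvPolynomial σ ℝ} (h : SOSD d P) (i : ℕ) : SOSD (i * d) (P ^ i) := by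
  induction i with
  | zero =>
      rw [pow_zero, Nat.zero_mul]
      have h1 := sosd_C (σ := σ) (d := 0) (a := (1:ℝ)) zero_le_one
      rwa [map_one] at h1
  | succ i ih =>
      rw [pow_succ, Nat.succ_mul]
      exact sosd_mul ih h

lemma sosd_sum {d : ℕ} {ι : Type*} (s : Finset ι) (f : ι → MvPolynomial σ ℝ)
    (h : ∀ i ∈ s, SOSD d (f i)) : SOSD d (∑ i ∈ s, f i) := by
  classical
  induction s using Finset.induction with
  | empty => simpa using sosd_zero d
  | insert _ _ hx ih =>
      rw [Finset.sum_insert hx]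
      exact sosd_add (h _ (Finset.mem_insert_self _ _))
        (ih fun i hi => h i (Finset.mem_insert_of_mem hi))

lemma natDegree_aeval_le {n : ℕ} (g : Fin n → Polynomial ℝ) (hg : ∀ j, (g j).natDegree ≤ 1)
    (P : MvPolynomial (Fin n) ℝ) : ((aeval g) P).natDegree ≤ P.totalDegree := by
  conv_lhs => rw [← P.support_sum_monomial_coeff]
  rw [map_sum]
  apply Polynomial.natDegree_sum_le_of_forall_le
  intro d hd
  rw [aeval_monomial]
  refine (Polynomial.natDegree_mul_le).trans ?_
  simp only [Polynomial.algebraMap_eq, Polynomial.natDegree_C, zero_add]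
  refine le_trans ?_ (le_totalDegree hd)
  rw [Finsupp.prod, Finsupp.sum]
  refine (Polynomial.natDegree_prod_le _ _).trans ?_
  refine Finset.sum_le_sum fun i _ => ?_
  refine (Polynomial.natDegree_pow_le).trans ?_
  calc d i * (g i).natDegree ≤ d i * 1 := Nat.mul_le_mul_left _ (hg i)
    _ = d i := Nat.mul_one _

section Lfacts

variable {n k : ℕ} {L : MvPolynomial (Fin n) ℝ → ℝ}

lemma L_zero (hL : IsPseudoExpectation n k L) : L 0 = 0 := by
  have h := hL.2.1 0 0
  simpa using h

lemma L_sub (hL : IsPseudoExpectation n k L) (P Q : MvPolynomial (Fin n) ℝ) :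
    L (P - Q) = L P - L Q := by
  have h := hL.1 (P - Q) Q
  rw [sub_add_cancel] at h
  linarith

lemma L_sum (hL : IsPseudoExpectation n k L) {ι : Type*} (s : Finset ι)
    (f : ι → MvPolynomial (Fin n) ℝ) : L (∑ i ∈ s, f i) = ∑ i ∈ s, L (f i) := by
  classical
  induction s using Finset.induction with
  | empty => simpa using L_zero hL
  | insert _ _ hx ih => rw [Finset.sum_insert hx, Finset.sum_insert hx, hL.1, ih]

lemma L_C_mul (hL : IsPseudoExpectation n k L) (a : ℝ) (P : MvPolynomial (Fin n) ℝ) :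
    L (MvPolynomial.C a * P) = a * L P := by
  rw [← MvPolynomial.smul_eq_C_mul, hL.2.1]

lemma L_C (hL : IsPseudoExpectation n k L) (a : ℝ) : L (MvPolynomial.C a) = a := by
  have h := L_C_mul hL a 1
  rw [mul_one, hL.2.2.1, mul_one] at h
  exact h

lemma L_nonneg_sosd (hL : IsPseudoExpectation n k L) {d : ℕ} (hd : 2 * d ≤ k)
    {P : MvPolynomial (Fin n) ℝ} (h : SOSD d P) : 0 ≤ L P := by
  obtain ⟨ι, _, q, hq, rfl⟩ := h
  rw [L_sum hL]
  refine Finset.sum_nonneg fun i _ => ?_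
  refine hL.2.2.2 _ ?_
  refine (MvPolynomial.totalDegree_pow _ _).trans ?_
  calc 2 * (q i).totalDegree ≤ 2 * d := Nat.mul_le_mul_left _ (hq i)
    _ ≤ k := hd

end Lfacts

/-- For a unit vector `c`, even `k ≥ 2`, `ε > 0`, `M ≥ 1`, and a degree-`(k+2)`
pseudoexpectation `L` satisfying `{‖u‖₂² = 1}` with `L ⟨c,u⟩^k ≥ e^{-εk}`, the polynomial
`W̄ = (⟨c,u⟩² + (1/M)‖u‖₂²)^{k/2}` is a sum of squares of degree `k`, `L W̄ ≥ e^{-εk}`,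
and `L (W̄ ⟨c,u⟩²) ≥ (1 - 2/M) L W̄ - (1 - 1/M)^{k/2}`. -/
theorem stmt12 (n : ℕ) (c : Fin n → ℝ) (hc : ∑ j, c j ^ 2 = 1)
    (k : ℕ) (hk : 2 ≤ k) (hke : Even k) (ε M : ℝ) (hε : 0 < ε) (hM : 1 ≤ M)
    (L : MvPolynomial (Fin n) ℝ → ℝ)
    (hL : IsPseudoExpectation n (k + 2) L)
    (hconstr : SatisfiesZero n (k + 2) L ((∑ j, X j ^ 2) - 1))
    (hLc : Real.exp (-(ε * k)) ≤ L ((∑ j, C (c j) * X j) ^ k))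
    (Wbar : MvPolynomial (Fin n) ℝ)
    (hWbar : Wbar = ((∑ j, C (c j) * X j) ^ 2 + C (1 / M) * ∑ j, X j ^ 2) ^ (k / 2)) :
    (IsSOS Wbar ∧ Wbar.totalDegree = k) ∧
    Real.exp (-(ε * k)) ≤ L Wbar ∧
    (1 - 2 / M) * L Wbar - (1 - 1 / M) ^ (k / 2) ≤
      L (Wbar * (∑ j, C (c j) * X j) ^ 2) := by
  classical
  obtain ⟨m, hm⟩ := hke
  have hmk : k = 2 * m := by omega
  have hm2 : k / 2 = m := by omega
  have hm1 : 1 ≤ m := by omega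
  have hM0 : (0:ℝ) < M := lt_of_lt_of_le one_pos hM
  have h1M : (0:ℝ) ≤ 1 / M := by positivity
  have h1M1 : 1 / M ≤ 1 := by rw [div_le_one hM0]; exact hM
  set v : MvPolynomial (Fin n) ℝ := ∑ j, C (c j) * X j with hv
  set sp : MvPolynomial (Fin n) ℝ := ∑ j, X j ^ 2 with hsp
  set a : ℝ := 1 - 1 / M with ha
  have ha0 : 0 ≤ a := by rw [ha]; linarith
  have ha1 : a ≤ 1 := by rw [ha]; linarith
  set p : MvPolynomial (Fin n) ℝ := v ^ 2 + C (1 / M) * sp with hp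
  clear_value v sp a p
  have hWp : Wbar = p ^ m := by rw [hWbar, hm2]
  -- degree bounds
  have hdv : v.totalDegree ≤ 1 := by
    rw [hv]
    refine (totalDegree_finset_sum _ _).trans (Finset.sup_le fun j _ => ?_)
    refine (totalDegree_mul _ _).trans ?_
    simp [totalDegree_X]
  have hds : sp.totalDegree ≤ 2 := by
    rw [hsp]
    refine (totalDegree_finset_sum _ _).trans (Finset.sup_le fun j _ => ?_)
    refine (totalDegree_pow _ _).trans ?_
    simp [totalDegree_X]
  have hdp : p.totalDegree ≤ 2 := by
    rw [hp]
    refine (totalDegree_add _ _).trans (max_le ?_ ?_)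
    · exact (totalDegree_pow _ _).trans
        (le_trans (Nat.mul_le_mul_left 2 hdv) (by norm_num))
    · refine (totalDegree_mul _ _).trans ?_
      simpa using hds
  -- SOS bounds
  have sos_v2 : SOSD 1 (v ^ 2) := sosd_sq hdv
  have sos_sp : SOSD 1 sp := by
    rw [hsp]
    exact sosd_sum _ _ fun j _ => sosd_sq (by simp [totalDegree_X])
  have sos_Cs : SOSD 1 (C (1 / M) * sp) := by
    rw [← smul_eq_C_mul]
    exact sosd_smul h1M sos_sp
  have sos_p : SOSD 1 p := hp ▸ sosd_add sos_v2 sos_Cs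
  have sos_pi : ∀ i : ℕ, SOSD i (p ^ i) := fun i => by simpa using sosd_pow sos_p i
  -- part (i): degree
  have hWd_le : Wbar.totalDegree ≤ k := by
    rw [hWp]
    refine (totalDegree_pow _ _).trans ?_
    calc m * p.totalDegree ≤ m * 2 := Nat.mul_le_mul_left _ hdp
      _ = k := by omega
  set g : Fin n → Polynomial ℝ := fun j => Polynomial.C (c j) * Polynomial.X with hg
  clear_value g
  have hgdeg : ∀ j, (g j).natDegree ≤ 1 := by
    intro j
    rw [hg]
    exact (Polynomial.natDegree_C_mul_le _ _).trans Polynomial.natDegree_X_le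
  have hav : (aeval g) v = Polynomial.X := by
    rw [hv, map_sum]
    have hterm : ∀ j : Fin n,
        (aeval g) (C (c j) * X j) = Polynomial.C (c j ^ 2) * Polynomial.X := by
      intro j
      rw [map_mul, aeval_C, aeval_X]
      simp only [hg, Polynomial.algebraMap_eq]
      rw [← mul_assoc, ← Polynomial.C_mul, ← sq]
    rw [Finset.sum_congr rfl fun j _ => hterm j, ← Finset.sum_mul, ← map_sum, hc,
      map_one, one_mul]
  have has : (aeval g) sp = Polynomial.X ^ 2 := by
    rw [hsp, map_sum]
    have hterm : ∀ j : Fin n,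
        (aeval g) ((X j : MvPolynomial (Fin n) ℝ) ^ 2) = Polynomial.C (c j ^ 2) * Polynomial.X ^ 2 := by
      intro j
      rw [map_pow, aeval_X]
      simp only [hg]
      rw [mul_pow, ← Polynomial.C_pow]
    rw [Finset.sum_congr rfl fun j _ => hterm j, ← Finset.sum_mul, ← map_sum, hc,
      map_one, one_mul]
  have hpa : (aeval g) p = Polynomial.C (1 + 1 / M) * Polynomial.X ^ 2 := by
    rw [hp, map_add, map_pow, map_mul, aeval_C, hav, has, Polynomial.algebraMap_eq]
    rw [map_add, map_one]
    ring
  have hap : (aeval g) Wbar = Polynomial.C ((1 + 1 / M) ^ m) * Polynomial.X ^ k := by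
    rw [hWp, map_pow, hpa, mul_pow, ← Polynomial.C_pow, ← pow_mul]
    congr 2
    omega
  have hWd_ge : k ≤ Wbar.totalDegree := by
    have h1 : ((aeval g) Wbar).natDegree = k := by
      rw [hap]
      exact Polynomial.natDegree_C_mul_X_pow _ _ (by positivity)
    rw [← h1]
    exact natDegree_aeval_le g hgdeg Wbar
  have hWdeg : Wbar.totalDegree = k := le_antisymm hWd_le hWd_ge
  have sos_W : SOSD m Wbar := hWp ▸ sos_pi m
  -- part (ii)
  have hsplit : Wbar = (∑ i ∈ Finset.range m,
      (v^2)^i * (C (1/M) * sp)^(m-i) * (m.choose i : MvPolynomial (Fin n) ℝ)) + v ^ k := by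
    rw [hWp, hp, add_pow, Finset.sum_range_succ]
    congr 1
    simp [hmk, pow_mul]
  have sos_diff : SOSD m (Wbar - v ^ k) := by
    rw [hsplit, add_sub_cancel_right]
    refine sosd_sum _ _ fun i hi => ?_
    have him : i < m := Finset.mem_range.mp hi
    have t1 : SOSD i ((v^2)^i) := by simpa using sosd_pow sos_v2 i
    have t2 : SOSD (m - i) ((C (1/M) * sp)^(m-i)) := by simpa using sosd_pow sos_Cs (m-i)
    have t3 : SOSD 0 ((m.choose i : MvPolynomial (Fin n) ℝ)) := by
      rw [← map_natCast (C : ℝ →+* MvPolynomial (Fin n) ℝ)]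
      exact sosd_C (Nat.cast_nonneg _)
    refine sosd_mono ?_ (sosd_mul (sosd_mul t1 t2) t3)
    omega
  have hLW_ge : Real.exp (-(ε * k)) ≤ L Wbar := by
    have h0 : 0 ≤ L (Wbar - v ^ k) := L_nonneg_sosd hL (by omega) sos_diff
    have h1 := L_sub hL Wbar (v ^ k)
    linarith
  -- part (iii)
  set H : MvPolynomial (Fin n) ℝ := ∑ i ∈ Finset.range m, p ^ i * (C a) ^ (m - 1 - i) with hH
  clear_value H
  have hgeo := geom_sum₂_mul p (C a) m
  have hkey : p ^ (m+1) - C a * p ^ m + C (a ^ m)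
      = (p - C a)^2 * H + C (a ^ m) * p + C (a ^ m * (1 - a)) := by
    have h2 : (C (a^m) : MvPolynomial (Fin n) ℝ) = (C a)^m := by rw [map_pow]
    have h3 : (C (a^m * (1-a)) : MvPolynomial (Fin n) ℝ) = (C a)^m * (1 - C a) := by
      rw [map_mul, map_pow, map_sub, map_one]
    rw [h2, h3, hH]
    linear_combination (C a - p) * hgeo
  have sos_H : SOSD (m - 1) H := by
    rw [hH]
    refine sosd_sum _ _ fun i hi => ?_
    have him : i < m := Finset.mem_range.mp hi
    have t2 : SOSD 0 ((C a : MvPolynomial (Fin n) ℝ) ^ (m - 1 - i)) := by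
      rw [← map_pow]
      exact sosd_C (pow_nonneg ha0 _)
    refine sosd_mono ?_ (sosd_mul (sos_pi i) t2)
    omega
  have sos_F : SOSD (m+1) (p ^ (m+1) - C a * p ^ m + C (a ^ m)) := by
    rw [hkey]
    have hd1 : (p - C a).totalDegree ≤ 2 := (totalDegree_sub_C_le _ _).trans hdp
    have s1 : SOSD (m+1) ((p - C a)^2 * H) :=
      sosd_mono (by omega) (sosd_mul (sosd_sq hd1) sos_H)
    have s2 : SOSD (m+1) (C (a ^ m) * p) := by
      rw [← smul_eq_C_mul]
      exact sosd_mono (by omega) (sosd_smul (pow_nonneg ha0 m) sos_p)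
    have s3 : SOSD (m+1) ((C (a ^ m * (1 - a)) : MvPolynomial (Fin n) ℝ)) :=
      sosd_C (mul_nonneg (pow_nonneg ha0 m) (by linarith))
    exact sosd_add (sosd_add s1 s2) s3
  have hLF : 0 ≤ L (p ^ (m+1)) - a * L (p ^ m) + a ^ m := by
    have hF : 0 ≤ L (p ^ (m+1) - C a * p ^ m + C (a ^ m)) :=
      L_nonneg_sosd hL (by omega) sos_F
    rwa [hL.1, L_sub hL, L_C_mul hL, L_C hL] at hF
  have hLWsp : L (Wbar * sp) = L Wbar := by
    have h1 : (sp - (1:MvPolynomial (Fin n) ℝ)).totalDegree ≤ 2 :=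
      (totalDegree_sub _ _).trans (max_le hds (by simp))
    have hdeg : ((sp - 1) * Wbar).totalDegree ≤ k + 2 := by
      refine (totalDegree_mul _ _).trans ?_
      omega
    have h0 := hconstr Wbar hdeg
    have hexp : (sp - 1) * Wbar = Wbar * sp - Wbar := by ring
    rw [hexp, L_sub hL] at h0
    linarith
  have hiden : p ^ (m+1) = Wbar * v ^ 2 + C (1/M) * (Wbar * sp) := by
    rw [hWp, hp, pow_succ]
    ring
  have hLid : L (p ^ (m+1)) = L (Wbar * v ^ 2) + (1/M) * L (Wbar * sp) := by
    rw [hiden, hL.1, L_C_mul hL]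
  have hLWp : L (p ^ m) = L Wbar := by rw [hWp]
  refine ⟨⟨sos_W.isSOS, hWdeg⟩, hLW_ge, ?_⟩
  rw [hm2]
  rw [hLWp] at hLF
  rw [hLWsp] at hLid
  rw [ha] at hLF ⊢
  have e1 : (1 - 1/M) * L Wbar = L Wbar - 1/M * L Wbar := by ring
  have e2 : (1 - 2/M) * L Wbar = L Wbar - 1/M * L Wbar - 1/M * L Wbar := by ring
  linarith
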